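/- In the m×n rectangle R = [0,m]×[0,n] of the square lattice, it is impossible for both an open left-right crossing of R (in the lattice ℤ² + (1/2,1/2)) and a closed dual top-bottom crossing of R (in the dual lattice ℤ²) to exist simultaneously, where each dual edge is open iff the unique lattice edge it crosses perpendicularly is open. -/

import Mathlib

/-- The unit-square grid graph on `ℤ²` (used both for the lattice
`G_d = ℤ² + (1/2,1/2)`, whose vertex `(i,j)` sits at the physical point
`(i+1/2, j+1/2) - (1/2,1/2) = (i,j)`, and for its dual lattice, whose vertex
`(i,j)` sits at the physical point `(i-1/2, j-1/2)`). -/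
def gridGraph : SimpleGraph (ℤ × ℤ) where
  Adj u v := (u.1 - v.1).natAbs + (u.2 - v.2).natAbs = 1
  symm := ⟨by intro u v h; omega⟩
  loopless := ⟨by intro u h; simp at h⟩

/-- The dual edge `f` (in the dual lattice, whose vertex `(i,j)` sits at
`(i-1/2, j-1/2)`) crosses the lattice edge `e` (whose vertex `(i,j)` sits at
`(i,j)`) perpendicularly. -/
def dualCross (e f : Sym2 (ℤ × ℤ)) : Prop :=
  ∃ i j : ℤ,
    (e = s(((i, j) : ℤ × ℤ), (i + 1, j)) ∧ f = s(((i + 1, j) : ℤ × ℤ), (i + 1, j + 1))) ∨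
    (e = s(((i, j) : ℤ × ℤ), (i, j + 1)) ∧ f = s(((i, j + 1) : ℤ × ℤ), (i + 1, j + 1)))

/-- A dual edge is closed iff the unique lattice edge it crosses perpendicularly
is closed. -/
def dualClosed (ω : Sym2 (ℤ × ℤ) → Prop) (f : Sym2 (ℤ × ℤ)) : Prop :=
  ∃ e, dualCross e f ∧ ¬ ω e

/-- A left-right crossing of the rectangle `R = [0,m] × [0,n]`: a self-avoiding
path in the lattice from the left side to the right side, all of whose vertices
lie in `R`, meeting the left side only at its first vertex and the right side
only at its last vertex. -/
def isLRCrossing (m n : ℤ) {u v : ℤ × ℤ} (w : gridGraph.Walk u v) : Prop :=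
  w.IsPath ∧ u.1 = 0 ∧ 0 ≤ u.2 ∧ u.2 ≤ n ∧ v.1 = m ∧ 0 ≤ v.2 ∧ v.2 ≤ n ∧
  (∀ x ∈ w.support, 0 ≤ x.1 ∧ x.1 ≤ m ∧ 0 ≤ x.2 ∧ x.2 ≤ n) ∧
  (∀ x ∈ w.support, x.1 = 0 → x = u) ∧ (∀ x ∈ w.support, x.1 = m → x = v)

/-- A dual top-bottom crossing of `R = [0,m] × [0,n]`: a self-avoiding path in the
dual lattice (vertex `(i,j)` at physical point `(i-1/2, j-1/2)`) whose first edge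
crosses the top side of `R`, whose last edge crosses the bottom side, and all of
whose intermediate vertices lie in the interior of `R`. -/
def isTBDualCrossing (m n : ℤ) {a b : ℤ × ℤ} (w : gridGraph.Walk a b) : Prop :=
  w.IsPath ∧ a.2 = n + 1 ∧ 1 ≤ a.1 ∧ a.1 ≤ m ∧ b.2 = 0 ∧ 1 ≤ b.1 ∧ b.1 ≤ m ∧
  ∀ x ∈ w.support, x ≠ a → x ≠ b → (1 ≤ x.1 ∧ x.1 ≤ m ∧ 1 ≤ x.2 ∧ x.2 ≤ n)

/-
## Auxiliary machinery

For a dual vertex `(p, q)` (sitting at the physical point `(p - 1/2, q - 1/2)`),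
we count (mod 2) the number of horizontal edges of the primal walk `γ` that are
crossed by the vertical ray going straight down from that physical point, i.e.
edges `{(p-1, j), (p, j)}` with `j < q`.  This parity is `1` at the top endpoint
of the dual walk, `0` at its bottom endpoint, and invariant along each step of
the dual walk whose dual edge is closed (since the crossed primal edge is then
not on the open walk `γ`).  This yields the contradiction.
-/

/-- Indicator (in `ZMod 2`) that the step `x → y` of a walk is a horizontal edge
`{(p-1, j), (p, j)}` with `j < q`, i.e. crosses the downward ray from the dual
vertex `(p, q)`. -/
private def xing (p q : ℤ) (x y : ℤ × ℤ) : ZMod 2 :=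
  if x.2 = y.2 ∧ x.2 < q ∧ ((x.1 = p - 1 ∧ y.1 = p) ∨ (x.1 = p ∧ y.1 = p - 1)) then 1 else 0

/-- Parity of the number of steps of `w` crossing the downward ray from the dual
vertex `(p, q)`. -/
private def cnt (p q : ℤ) {u v : ℤ × ℤ} (w : gridGraph.Walk u v) : ZMod 2 :=
  (w.darts.map (fun d => xing p q d.toProd.1 d.toProd.2)).sum

private lemma z2 : ∀ a : ZMod 2, a + a = 0 := by decide

private lemma zsum : ∀ a b : ZMod 2, a + b = 0 → a = b := by decide

private lemma sum_map_add {α : Type} (l : List α) (f g : α → ZMod 2) :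
    (l.map f).sum + (l.map g).sum = (l.map (fun x => f x + g x)).sum := by
  induction l with
  | nil => simp
  | cons a l ih => simp only [List.map_cons, List.sum_cons]; rw [← ih]; ring

/-- Telescoping sums over the darts of a walk. -/
private lemma tele (h : ℤ × ℤ → ZMod 2) {u v : ℤ × ℤ} (w : gridGraph.Walk u v) :
    (w.darts.map (fun d => h d.toProd.1 + h d.toProd.2)).sum = h u + h v := by
  induction w with
  | nil =>
      simp only [SimpleGraph.Walk.darts_nil, List.map_nil, List.sum_nil]
      exact (z2 _).symm
  | @cons a c v h' w ih =>
      simp only [SimpleGraph.Walk.darts_cons, List.map_cons, List.sum_cons, ih]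
      rw [show h a + h c + (h c + h v) = h a + (h c + h c) + h v by ring, z2, add_zero]

/-- Chaining a dart-wise invariant along a walk. -/
private lemma chainF (F : ℤ × ℤ → ZMod 2) {a b : ℤ × ℤ} (w : gridGraph.Walk a b)
    (h : ∀ d ∈ w.darts, F d.toProd.1 = F d.toProd.2) : F a = F b := by
  induction w with
  | nil => rfl
  | @cons a c v h' w ih =>
      have h1 := h ⟨(a, c), h'⟩ (by simp)
      exact h1.trans (ih fun d hd => h d (by simp [hd]))

set_option maxHeartbeats 1000000 in
/-- With `q = n + 1` (above the strip containing the walk), the ray-crossing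
indicator telescopes via the function `z ↦ [p ≤ z.1]`. -/
private lemma L1 (p n : ℤ) (x y : ℤ × ℤ) (hadj : gridGraph.Adj x y) (hx : x.2 ≤ n) :
    xing p (n + 1) x y
      = (if p ≤ x.1 then 1 else 0) + (if p ≤ y.1 then (1 : ZMod 2) else 0) := by
  have h : (x.1 - y.1).natAbs + (x.2 - y.2).natAbs = 1 := hadj
  unfold xing
  split_ifs <;> first | decide | (exfalso; omega)

private lemma L0 (p : ℤ) (x y : ℤ × ℤ) (hx : 0 ≤ x.2) : xing p 0 x y = 0 := by
  unfold xing
  split_ifs with hc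
  · exfalso; omega
  · rfl

set_option maxHeartbeats 1000000 in
/-- Moving the dual vertex up by one only changes the count through the single
primal edge `{(p-1, q), (p, q)}`. -/
private lemma L2 (p q : ℤ) (x y : ℤ × ℤ)
    (hne : s(x, y) ≠ s(((p - 1, q) : ℤ × ℤ), (p, q))) :
    xing p (q + 1) x y = xing p q x y := by
  simp only [ne_eq, Sym2.eq_iff, Prod.ext_iff] at hne
  unfold xing
  split_ifs <;> first | rfl | (exfalso; omega)

set_option maxHeartbeats 2000000 in
/-- Moving the dual vertex right by one: provided the step is not the vertical
primal edge `{(p, q-1), (p, q)}`, the sum of the two ray-crossing indicators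
telescopes via the indicator of the half-line `{(p, j) : j < q}`. -/
private lemma L3 (p q : ℤ) (x y : ℤ × ℤ) (hadj : gridGraph.Adj x y)
    (hne : s(x, y) ≠ s(((p, q - 1) : ℤ × ℤ), (p, q))) :
    xing p q x y + xing (p + 1) q x y
      = (if x.1 = p ∧ x.2 < q then 1 else 0)
        + (if y.1 = p ∧ y.2 < q then (1 : ZMod 2) else 0) := by
  have h : (x.1 - y.1).natAbs + (x.2 - y.2).natAbs = 1 := hadj
  simp only [ne_eq, Sym2.eq_iff, Prod.ext_iff] at hne
  unfold xing
  split_ifs <;> first | decide | (exfalso; omega)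

/-- The unique primal edge crossed by a vertical dual edge. -/
private lemma dualCross_vert {e : Sym2 (ℤ × ℤ)} {p q : ℤ}
    (h : dualCross e s(((p, q) : ℤ × ℤ), (p, q + 1))) :
    e = s(((p - 1, q) : ℤ × ℤ), (p, q)) := by
  obtain ⟨i, j, ⟨he, hf⟩ | ⟨he, hf⟩⟩ := h
  · rw [Sym2.eq_iff] at hf
    simp only [Prod.ext_iff] at hf
    obtain ⟨rfl, rfl⟩ : i = p - 1 ∧ j = q := by omega
    rw [he]; norm_num
  · rw [Sym2.eq_iff] at hf
    simp only [Prod.ext_iff] at hf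
    exfalso; omega

/-- The unique primal edge crossed by a horizontal dual edge. -/
private lemma dualCross_horiz {e : Sym2 (ℤ × ℤ)} {p q : ℤ}
    (h : dualCross e s(((p, q) : ℤ × ℤ), (p + 1, q))) :
    e = s(((p, q - 1) : ℤ × ℤ), (p, q)) := by
  obtain ⟨i, j, ⟨he, hf⟩ | ⟨he, hf⟩⟩ := h
  · rw [Sym2.eq_iff] at hf
    simp only [Prod.ext_iff] at hf
    exfalso; omega
  · rw [Sym2.eq_iff] at hf
    simp only [Prod.ext_iff] at hf
    obtain ⟨rfl, rfl⟩ : i = p ∧ j = q - 1 := by omega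
    rw [he]; norm_num

private lemma dart_edge_mem {u v : ℤ × ℤ} (w : gridGraph.Walk u v) (d : gridGraph.Dart)
    (hd : d ∈ w.darts) : s(d.toProd.1, d.toProd.2) ∈ w.edges := by
  unfold SimpleGraph.Walk.edges
  exact List.mem_map_of_mem hd

/-- It is impossible for an open left-right crossing of the rectangle `R` and a
closed dual top-bottom crossing of `R` to exist simultaneously. -/
theorem no_open_LR_and_closed_dual_TB (m n : ℤ) (hm : 0 < m) (hn : 0 < n)
    (ω : Sym2 (ℤ × ℤ) → Prop) :
    ¬ ((∃ (u v : ℤ × ℤ) (w : gridGraph.Walk u v), isLRCrossing m n w ∧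
          ∀ e ∈ w.edges, ω e) ∧
       (∃ (a b : ℤ × ℤ) (w : gridGraph.Walk a b), isTBDualCrossing m n w ∧
          ∀ f ∈ w.edges, dualClosed ω f)) := by
  rintro ⟨⟨u, v, γ, hγ, hopen⟩, a, b, δ, hδ, hclosed⟩
  obtain ⟨hγp, hu1, hu2a, hu2b, hv1, hv2a, hv2b, hsupp, hleft, hright⟩ := hγ
  obtain ⟨hδp, ha2, ha1a, ha1b, hb2, hb1a, hb1b, hδint⟩ := hδ
  -- The value at the top endpoint of the dual walk is 1.
  have htop : cnt a.1 (n + 1) γ = 1 := by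
    have h1 : cnt a.1 (n + 1) γ
        = (γ.darts.map (fun d =>
            (if a.1 ≤ d.toProd.1.1 then 1 else 0)
              + (if a.1 ≤ d.toProd.2.1 then (1 : ZMod 2) else 0))).sum := by
      unfold cnt
      refine congrArg List.sum (List.map_congr_left fun d hd => ?_)
      exact L1 _ _ _ _ d.adj
        ((hsupp _ (SimpleGraph.Walk.dart_fst_mem_support_of_mem_darts _ hd)).2.2.2)
    have h2 : (γ.darts.map (fun d =>
            (if a.1 ≤ d.toProd.1.1 then 1 else 0)
              + (if a.1 ≤ d.toProd.2.1 then (1 : ZMod 2) else 0))).sum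
        = (if a.1 ≤ u.1 then 1 else 0) + (if a.1 ≤ v.1 then (1 : ZMod 2) else 0) :=
      tele (fun z => if a.1 ≤ z.1 then 1 else 0) γ
    rw [h1, h2, if_neg (by omega), if_pos (by omega), zero_add]
  -- The value at the bottom endpoint of the dual walk is 0.
  have hbot : cnt b.1 0 γ = 0 := by
    unfold cnt
    refine List.sum_eq_zero fun x hx => ?_
    obtain ⟨d, hd, rfl⟩ := List.mem_map.mp hx
    exact L0 _ _ _
      ((hsupp _ (SimpleGraph.Walk.dart_fst_mem_support_of_mem_darts _ hd)).2.2.1)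
  -- The value is invariant along the dual walk.
  have hinv : cnt a.1 a.2 γ = cnt b.1 b.2 γ := by
    refine chainF (fun z => cnt z.1 z.2 γ) δ fun d hd => ?_
    set c : ℤ × ℤ := d.toProd.1 with hcdef
    set c' : ℤ × ℤ := d.toProd.2 with hc'def
    have hadj : gridGraph.Adj c c' := d.adj
    have hnat : (c.1 - c'.1).natAbs + (c.2 - c'.2).natAbs = 1 := hadj
    have hfe : s(c, c') ∈ δ.edges := dart_edge_mem δ d hd
    have hccne : c ≠ c' := hadj.ne
    have hcs : c ∈ δ.support := SimpleGraph.Walk.dart_fst_mem_support_of_mem_darts _ hd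
    have hcs' : c' ∈ δ.support := SimpleGraph.Walk.dart_snd_mem_support_of_mem_darts _ hd
    rcases (by omega :
        (c'.1 = c.1 ∧ c'.2 = c.2 + 1) ∨ (c'.1 = c.1 ∧ c.2 = c'.2 + 1) ∨
        (c'.2 = c.2 ∧ c'.1 = c.1 + 1) ∨ (c'.2 = c.2 ∧ c.1 = c'.1 + 1)) with
      ⟨h1, h2⟩ | ⟨h1, h2⟩ | ⟨h1, h2⟩ | ⟨h1, h2⟩
    · -- vertical step, upward
      have hc' : c' = (c.1, c.2 + 1) := Prod.ext h1 h2
      have hcl' : dualClosed ω s(((c.1, c.2) : ℤ × ℤ), (c.1, c.2 + 1)) := by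
        rw [← hc']; exact hclosed _ hfe
      obtain ⟨e, hcr, hnω⟩ := hcl'
      have he := dualCross_vert hcr
      have key : ∀ dd ∈ γ.darts,
          xing c.1 (c.2 + 1) dd.toProd.1 dd.toProd.2
            = xing c.1 c.2 dd.toProd.1 dd.toProd.2 := by
        intro dd hdd
        refine L2 _ _ _ _ fun heq => hnω ?_
        rw [he, ← heq]
        exact hopen _ (dart_edge_mem γ dd hdd)
      show cnt c.1 c.2 γ = cnt c'.1 c'.2 γ
      rw [h1, h2]
      exact (congrArg List.sum (List.map_congr_left key)).symm
    · -- vertical step, downward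
      have hc : c = (c'.1, c'.2 + 1) := Prod.ext h1.symm h2
      have hcl' : dualClosed ω s(((c'.1, c'.2) : ℤ × ℤ), (c'.1, c'.2 + 1)) := by
        have hsw : s(c, c') = s(((c'.1, c'.2) : ℤ × ℤ), (c'.1, c'.2 + 1)) := by
          rw [hc]; exact Sym2.eq_swap
        rw [← hsw]; exact hclosed _ hfe
      obtain ⟨e, hcr, hnω⟩ := hcl'
      have he := dualCross_vert hcr
      have key : ∀ dd ∈ γ.darts,
          xing c'.1 (c'.2 + 1) dd.toProd.1 dd.toProd.2
            = xing c'.1 c'.2 dd.toProd.1 dd.toProd.2 := by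
        intro dd hdd
        refine L2 _ _ _ _ fun heq => hnω ?_
        rw [he, ← heq]
        exact hopen _ (dart_edge_mem γ dd hdd)
      show cnt c.1 c.2 γ = cnt c'.1 c'.2 γ
      rw [h2, (by omega : c.1 = c'.1)]
      exact congrArg List.sum (List.map_congr_left key)
    · -- horizontal step, rightward
      -- both endpoints are interior dual vertices
      have hca : c ≠ a := by
        rintro rfl
        have hne1 : c' ≠ c := hccne.symm
        have hne2 : c' ≠ b := by rintro rfl; omega
        have := hδint c' hcs' hne1 hne2
        omega
      have hcb : c ≠ b := by
        rintro rfl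
        have hne1 : c' ≠ c := hccne.symm
        have hne2 : c' ≠ a := by rintro rfl; omega
        have := hδint c' hcs' hne2 hne1
        omega
      have hc'a : c' ≠ a := by
        rintro rfl
        have hne2 : c ≠ b := by rintro rfl; omega
        have := hδint c hcs hccne hne2
        omega
      have hc'b : c' ≠ b := by
        rintro rfl
        have hne2 : c ≠ a := by rintro rfl; omega
        have := hδint c hcs hne2 hccne
        omega
      have hic := hδint c hcs hca hcb
      have hic' := hδint c' hcs' hc'a hc'b
      have hc' : c' = (c.1 + 1, c.2) := Prod.ext h2 h1
      have hcl' : dualClosed ω s(((c.1, c.2) : ℤ × ℤ), (c.1 + 1, c.2)) := by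
        rw [← hc']; exact hclosed _ hfe
      obtain ⟨e, hcr, hnω⟩ := hcl'
      have he := dualCross_horiz hcr
      have key : ∀ dd ∈ γ.darts,
          xing c.1 c.2 dd.toProd.1 dd.toProd.2
              + xing (c.1 + 1) c.2 dd.toProd.1 dd.toProd.2
            = (if dd.toProd.1.1 = c.1 ∧ dd.toProd.1.2 < c.2 then 1 else 0)
              + (if dd.toProd.2.1 = c.1 ∧ dd.toProd.2.2 < c.2 then (1 : ZMod 2) else 0) := by
        intro dd hdd
        refine L3 _ _ _ _ dd.adj fun heq => hnω ?_
        rw [he, ← heq]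
        exact hopen _ (dart_edge_mem γ dd hdd)
      have hsum : cnt c.1 c.2 γ + cnt (c.1 + 1) c.2 γ = 0 := by
        unfold cnt
        rw [sum_map_add, congrArg List.sum (List.map_congr_left key)]
        have ht : (γ.darts.map (fun dd =>
              (if dd.toProd.1.1 = c.1 ∧ dd.toProd.1.2 < c.2 then 1 else 0)
                + (if dd.toProd.2.1 = c.1 ∧ dd.toProd.2.2 < c.2 then (1 : ZMod 2) else 0))).sum
            = (if u.1 = c.1 ∧ u.2 < c.2 then 1 else 0)
              + (if v.1 = c.1 ∧ v.2 < c.2 then (1 : ZMod 2) else 0) :=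
          tele (fun z => if z.1 = c.1 ∧ z.2 < c.2 then 1 else 0) γ
        rw [ht, if_neg (by omega), if_neg (by omega), add_zero]
      show cnt c.1 c.2 γ = cnt c'.1 c'.2 γ
      rw [h1, h2]
      exact zsum _ _ hsum
    · -- horizontal step, leftward
      have hca : c ≠ a := by
        rintro rfl
        have hne1 : c' ≠ c := hccne.symm
        have hne2 : c' ≠ b := by rintro rfl; omega
        have := hδint c' hcs' hne1 hne2
        omega
      have hcb : c ≠ b := by
        rintro rfl
        have hne1 : c' ≠ c := hccne.symm
        have hne2 : c' ≠ a := by rintro rfl; omega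
        have := hδint c' hcs' hne2 hne1
        omega
      have hc'a : c' ≠ a := by
        rintro rfl
        have hne2 : c ≠ b := by rintro rfl; omega
        have := hδint c hcs hccne hne2
        omega
      have hc'b : c' ≠ b := by
        rintro rfl
        have hne2 : c ≠ a := by rintro rfl; omega
        have := hδint c hcs hne2 hccne
        omega
      have hic := hδint c hcs hca hcb
      have hic' := hδint c' hcs' hc'a hc'b
      have hc : c = (c'.1 + 1, c'.2) := Prod.ext h2 h1.symm
      have hcl' : dualClosed ω s(((c'.1, c'.2) : ℤ × ℤ), (c'.1 + 1, c'.2)) := by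
        have hsw : s(c, c') = s(((c'.1, c'.2) : ℤ × ℤ), (c'.1 + 1, c'.2)) := by
          rw [hc]; exact Sym2.eq_swap
        rw [← hsw]; exact hclosed _ hfe
      obtain ⟨e, hcr, hnω⟩ := hcl'
      have he := dualCross_horiz hcr
      have key : ∀ dd ∈ γ.darts,
          xing c'.1 c'.2 dd.toProd.1 dd.toProd.2
              + xing (c'.1 + 1) c'.2 dd.toProd.1 dd.toProd.2
            = (if dd.toProd.1.1 = c'.1 ∧ dd.toProd.1.2 < c'.2 then 1 else 0)
              + (if dd.toProd.2.1 = c'.1 ∧ dd.toProd.2.2 < c'.2 then (1 : ZMod 2) else 0) := by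
        intro dd hdd
        refine L3 _ _ _ _ dd.adj fun heq => hnω ?_
        rw [he, ← heq]
        exact hopen _ (dart_edge_mem γ dd hdd)
      have hsum : cnt c'.1 c'.2 γ + cnt (c'.1 + 1) c'.2 γ = 0 := by
        unfold cnt
        rw [sum_map_add, congrArg List.sum (List.map_congr_left key)]
        have ht : (γ.darts.map (fun dd =>
              (if dd.toProd.1.1 = c'.1 ∧ dd.toProd.1.2 < c'.2 then 1 else 0)
                + (if dd.toProd.2.1 = c'.1 ∧ dd.toProd.2.2 < c'.2 then (1 : ZMod 2) else 0))).sum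
            = (if u.1 = c'.1 ∧ u.2 < c'.2 then 1 else 0)
              + (if v.1 = c'.1 ∧ v.2 < c'.2 then (1 : ZMod 2) else 0) :=
          tele (fun z => if z.1 = c'.1 ∧ z.2 < c'.2 then 1 else 0) γ
        rw [ht, if_neg (by omega), if_neg (by omega), add_zero]
      show cnt c.1 c.2 γ = cnt c'.1 c'.2 γ
      rw [h2, (by omega : c.2 = c'.2)]
      exact (zsum _ _ hsum).symm
  rw [ha2, hb2, htop, hbot] at hinv
  exact one_ne_zero hinv
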